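/- arXiv:math/0407281 — 6 statements merged into one kernel-verified Lean document; each statement's English description precedes it below -/
import Mathlib

section
/- Liu's modified Gibbs update probabilities U'_x(y,z) = min(T(x,z)/(1−T(x,y)), T(x,z)/(1−T(x,z))) for z ≠ y satisfy the detailed balance condition T(x,y)·U'_x(y,z) = T(x,z)·U'_x(z,y) for all y ≠ z. -/
theorem liu_update_detailed_balance
    {X : Type*} [Fintype X]
    (T : X → X → ℝ)
    (hTnn : ∀ x y, 0 ≤ T x y) (hTrow : ∀ x, ∑ y, T x y = 1)
    (U' : X → X → X → ℝ)
    (hU' : ∀ x y z, z ≠ y → T x y < 1 → T x z < 1 →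
      U' x y z = min (T x z / (1 - T x y)) (T x z / (1 - T x z))) :
    ∀ x y z, y ≠ z → T x y < 1 → T x z < 1 →
      T x y * U' x y z = T x z * U' x z y := by
  intro x y z hyz hy hz
  rw [hU' x y z (Ne.symm hyz) hy hz, hU' x z y hyz hz hy]
  rw [mul_min_of_nonneg _ _ (hTnn x y), mul_min_of_nonneg _ _ (hTnn x z)]
  rw [min_comm]
  ring_nf
end

section
/- Liu's modified Gibbs update probabilities satisfy U'_x(y,z) ≥ T(x,z) for all y ≠ z, i.e., the probability of moving to any state other than the current one is at least as large as under the original update. -/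
theorem liu_update_dominates
    {X : Type*} [Fintype X]
    (T : X → X → ℝ)
    (hTnn : ∀ x y, 0 ≤ T x y) (hTrow : ∀ x, ∑ y, T x y = 1)
    (U' : X → X → X → ℝ)
    (hU' : ∀ x y z, z ≠ y →
      U' x y z = min (T x z / (1 - T x y)) (T x z / (1 - T x z))) :
    ∀ x y z, y ≠ z → T x y < 1 → T x z < 1 → T x z ≤ U' x y z := by
  intro x y z hyz hTy hTz
  rw [hU' x y z hyz.symm, le_min_iff]
  have h1 : 0 < 1 - T x y := by linarith
  have h2 : 0 < 1 - T x z := by linarith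
  constructor
  · rw [le_div_iff₀ h1]
    nlinarith [hTnn x y, hTnn x z]
  · rw [le_div_iff₀ h2]
    nlinarith [hTnn x z]
end

section
/- Let T satisfy detailed balance with respect to π, and let U'_x(y,·) be probability distributions on X satisfying T(x,y)U'_x(y,z) = T(x,z)U'_x(z,y) for all y ≠ z. Then the transition probabilities T̈'((x₀,x₁),(y₀,y₁)) = δ(x₁,y₀)·U'_{x₁}(x₀,y₁) on Ẍ = {(x,y) : T(x,y) > 0} leave invariant the distribution π̈(x,y) = π(x)T(x,y): for all (x₁,y₁) ∈ Ẍ, ∑_{(x₀,y₀)∈Ẍ} π̈(x₀,y₀)·T̈'((x₀,y₀),(x₁,y₁)) = π̈(x₁,y₁). -/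
theorem no_backtracking_invariance
    {X : Type*} [Fintype X] [DecidableEq X]
    (T : X → X → ℝ) (π : X → ℝ)
    (hTnn : ∀ x y, 0 ≤ T x y) (hTrow : ∀ x, ∑ y, T x y = 1)
    (hπnn : ∀ x, 0 ≤ π x) (hπsum : ∑ x, π x = 1)
    (hdb : ∀ x y, π x * T x y = π y * T y x)
    (U' : X → X → X → ℝ)
    (hU'nn : ∀ x y z, 0 ≤ U' x y z) (hU'row : ∀ x y, ∑ z, U' x y z = 1)
    (hU'bal : ∀ x y z, y ≠ z → T x y * U' x y z = T x z * U' x z y)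
    (Tdd : X × X → X × X → ℝ)
    (hTdd : ∀ p q, Tdd p q = (if p.2 = q.1 then 1 else 0) * U' p.2 p.1 q.2) :
    ∀ x₁ y₁ : X, 0 < T x₁ y₁ →
      ∑ p ∈ Finset.univ.filter (fun p : X × X => 0 < T p.1 p.2),
        (π p.1 * T p.1 p.2) * Tdd p (x₁, y₁) = π x₁ * T x₁ y₁ := by
  intro x₁ y₁ hT
  have hfull : ∑ p ∈ Finset.univ.filter (fun p : X × X => 0 < T p.1 p.2),
      (π p.1 * T p.1 p.2) * Tdd p (x₁, y₁)
      = ∑ p : X × X, (π p.1 * T p.1 p.2) * Tdd p (x₁, y₁) := by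
    apply Finset.sum_subset (Finset.filter_subset _ _)
    intro p _ hp
    simp only [Finset.mem_filter, Finset.mem_univ, true_and, not_lt] at hp
    have : T p.1 p.2 = 0 := le_antisymm hp (hTnn _ _)
    rw [this]; ring
  rw [hfull]
  have key : ∀ p : X × X, (π p.1 * T p.1 p.2) * Tdd p (x₁, y₁)
      = (if p.2 = x₁ then π x₁ * T x₁ y₁ * U' x₁ y₁ p.1 else 0) := by
    intro p
    rw [hTdd]
    by_cases h : p.2 = x₁
    · rw [if_pos h, if_pos h, one_mul, h]
      by_cases h2 : p.1 = y₁
      · rw [h2, hdb]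
      · have h1 := hU'bal x₁ p.1 y₁ h2
        have h3 := hdb p.1 x₁
        calc π p.1 * T p.1 x₁ * U' x₁ p.1 y₁
            = π x₁ * (T x₁ p.1 * U' x₁ p.1 y₁) := by rw [mul_assoc, ← mul_assoc, h3, mul_assoc]
          _ = π x₁ * (T x₁ y₁ * U' x₁ y₁ p.1) := by rw [h1]
          _ = π x₁ * T x₁ y₁ * U' x₁ y₁ p.1 := by ring
    · rw [if_neg h, if_neg h]; ring
  rw [Finset.sum_congr rfl (fun p _ => key p)]
  rw [Fintype.sum_prod_type]
  have : ∀ x₀ : X, ∑ y₀ : X, (if y₀ = x₁ then π x₁ * T x₁ y₁ * U' x₁ y₁ x₀ else 0)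
      = π x₁ * T x₁ y₁ * U' x₁ y₁ x₀ := fun x₀ => Finset.sum_ite_eq' _ _ _ |>.trans (by simp)
  rw [Finset.sum_congr rfl (fun x₀ _ => this x₀), ← Finset.mul_sum, hU'row]
  ring
end

section
/- If X has at least three elements and T is irreducible, then the no-backtracking chain T̈' on Ẍ is not reversible with respect to π̈: there exist states (x,y), (y,z) ∈ Ẍ with π̈(x,y)·T̈'((x,y),(y,z)) ≠ π̈(y,z)·T̈'((y,z),(x,y)). -/
theorem no_backtracking_nonreversible
    {X : Type*} [Fintype X] [DecidableEq X]
    (hcard : 3 ≤ Fintype.card X)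
    (T : X → X → ℝ) (π : X → ℝ)
    (hTnn : ∀ x y, 0 ≤ T x y) (hTrow : ∀ x, ∑ y, T x y = 1)
    (hπpos : ∀ x, 0 < π x) (hπsum : ∑ x, π x = 1)
    (hdb : ∀ x y, π x * T x y = π y * T y x)
    (hirr : ∀ x y : X, Relation.TransGen (fun a b => 0 < T a b) x y)
    (U' : X → X → X → ℝ)
    (hU'nn : ∀ x y z, 0 ≤ U' x y z) (hU'row : ∀ x y, ∑ z, U' x y z = 1)
    (hU'bal : ∀ x y z, y ≠ z → T x y * U' x y z = T x z * U' x z y)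
    (hU'ge : ∀ x y z, y ≠ z → T x z ≤ U' x y z)
    (Tdd : X × X → X × X → ℝ)
    (hTdd : ∀ p q, Tdd p q = (if p.2 = q.1 then 1 else 0) * U' p.2 p.1 q.2) :
    ∃ x y z : X, 0 < T x y ∧ 0 < T y z ∧
      (π x * T x y) * Tdd (x, y) (y, z) ≠
      (π y * T y z) * Tdd (y, z) (x, y) := by
  -- Step 1: there is a path x → y → z with x ≠ z, T x y > 0, T y z > 0.
  have key : ∃ x y z : X, x ≠ z ∧ 0 < T x y ∧ 0 < T y z := by
    -- First, find x ≠ y with T x y > 0.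
    obtain ⟨a, b, hab⟩ := Fintype.exists_pair_of_one_lt_card (α := X) (by omega)
    have hexy : ∃ x y : X, x ≠ y ∧ 0 < T x y := by
      by_contra h
      push_neg at h
      have heq : ∀ u v : X, 0 < T u v → u = v := by
        intro u v huv
        by_contra hne
        exact absurd huv (not_lt.2 (h u v hne))
      have : a = b := by
        have h' : Relation.TransGen (@Eq X) a b := Relation.TransGen.mono (p := @Eq X) heq a b (hirr a b)
        rwa [@Relation.transGen_eq_self X (@Eq X) ⟨fun _ _ _ h1 h2 => h1.trans h2⟩] at h'
      exact hab this
    obtain ⟨x, y, hxy, hTxy⟩ := hexy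
    by_cases h1 : ∃ z, z ≠ x ∧ 0 < T y z
    · obtain ⟨z, hzx, hTyz⟩ := h1
      exact ⟨x, y, z, fun h => hzx h.symm, hTxy, hTyz⟩
    · push_neg at h1
      have hy0 : ∀ z, z ≠ x → T y z = 0 :=
        fun z hz => le_antisymm (not_lt.1 (fun h => (h1 z hz).not_gt h)) (hTnn y z)
      by_cases h2 : ∃ w, w ≠ y ∧ 0 < T x w
      · obtain ⟨w, hwy, hTxw⟩ := h2
        have hTwx : 0 < T w x := by
          have := hdb x w
          nlinarith [hπpos x, hπpos w, hTnn w x]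
        exact ⟨w, x, y, fun h => hwy h, hTwx, hTxy⟩
      · push_neg at h2
        have hx0 : ∀ w, w ≠ y → T x w = 0 :=
          fun w hw => le_antisymm (not_lt.1 (fun h => (h2 w hw).not_gt h)) (hTnn x w)
        -- the chain from x never leaves {x, y}; contradict card ≥ 3.
        exfalso
        have hclosed : ∀ v, Relation.TransGen (fun a b => 0 < T a b) x v → v = x ∨ v = y := by
          intro v hv
          induction hv with
          | @single c h =>
            by_cases hcy : c = y
            · exact Or.inr hcy
            · exact absurd h (by rw [hx0 c hcy]; exact lt_irrefl 0)
          | @tail u c _ hc ih =>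
            rcases ih with rfl | rfl
            · by_cases hcy : c = y
              · exact Or.inr hcy
              · exact absurd hc (by rw [hx0 c hcy]; exact lt_irrefl 0)
            · by_cases hcx : c = x
              · exact Or.inl hcx
              · exact absurd hc (by rw [hy0 c hcx]; exact lt_irrefl 0)
        have hsub : (Finset.univ : Finset X) ⊆ {x, y} := by
          intro v _
          rcases hclosed v (hirr x v) with rfl | rfl <;> simp
        have := Finset.card_le_card hsub
        have h2' : ({x, y} : Finset X).card ≤ 2 := Finset.card_insert_le _ _ |>.trans (by simp)
        rw [Finset.card_univ] at this
        omega
  obtain ⟨x, y, z, hxz, hTxy, hTyz⟩ := key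
  refine ⟨x, y, z, hTxy, hTyz, ?_⟩
  have hU : 0 < U' y x z := lt_of_lt_of_le hTyz (hU'ge y x z hxz)
  have hL : 0 < (π x * T x y) * Tdd (x, y) (y, z) := by
    rw [hTdd]
    norm_num
    exact mul_pos (mul_pos (hπpos x) hTxy) hU
  have hR : (π y * T y z) * Tdd (y, z) (x, y) = 0 := by
    rw [hTdd]
    simp only []
    rw [if_neg hxz.symm]
    ring
  rw [hR]
  exact ne_of_gt hL
end

section
/- If T and T' both satisfy detailed balance with respect to π and T'(x,y) ≥ T(x,y) for all x ≠ y, then there exists a finite sequence of stochastic matrices T = T₀, T₁, ..., T_k = T', each satisfying detailed balance with respect to π, such that consecutive matrices differ only in the four entries indexed by some pair of states {A,B} (with off-diagonal entries nondecreasing along the sequence). -/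
open Finset

private lemma pair_code_eq {n a b c d : ℕ} (ha : a < n) (hc : c < n)
    (h : max a b * n + min a b = max c d * n + min c d) :
    (a = c ∧ b = d) ∨ (a = d ∧ b = c) := by
  have hn : 0 < n := by omega
  have key : ∀ M m : ℕ, m < n → (M * n + m) / n = M ∧ (M * n + m) % n = m := by
    intro M m hm
    constructor
    · rw [Nat.mul_comm, Nat.mul_add_div hn, Nat.div_eq_of_lt hm]; omega
    · rw [Nat.mul_comm, Nat.mul_add_mod, Nat.mod_eq_of_lt hm]
  have hm1 : min a b < n := lt_of_le_of_lt (min_le_left _ _) ha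
  have hm2 : min c d < n := lt_of_le_of_lt (min_le_left _ _) hc
  have h1 := key (max a b) (min a b) hm1
  have h2 := key (max c d) (min c d) hm2
  have hM : max a b = max c d := by rw [← h1.1, ← h2.1, h]
  have hm : min a b = min c d := by rw [← h1.2, ← h2.2, h]
  omega

theorem peskun_decomposition
    {X : Type*} [Fintype X]
    (T T' : X → X → ℝ) (π : X → ℝ)
    (hTnn : ∀ x y, 0 ≤ T x y) (hTrow : ∀ x, ∑ y, T x y = 1)
    (hT'nn : ∀ x y, 0 ≤ T' x y) (hT'row : ∀ x, ∑ y, T' x y = 1)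
    (hπnn : ∀ x, 0 ≤ π x) (hπsum : ∑ x, π x = 1)
    (hdb : ∀ x y, π x * T x y = π y * T y x)
    (hdb' : ∀ x y, π x * T' x y = π y * T' y x)
    (hge : ∀ x y, x ≠ y → T x y ≤ T' x y) :
    ∃ (k : ℕ) (seq : ℕ → X → X → ℝ),
      seq 0 = T ∧ seq k = T' ∧
      (∀ i ≤ k, (∀ x y, 0 ≤ seq i x y) ∧ (∀ x, ∑ y, seq i x y = 1) ∧
        (∀ x y, π x * seq i x y = π y * seq i y x)) ∧
      (∀ i < k, ∃ A B : X,
        (∀ x y, ¬ ((x = A ∨ x = B) ∧ (y = A ∨ y = B)) →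
          seq (i + 1) x y = seq i x y) ∧
        (∀ x y, x ≠ y → seq i x y ≤ seq (i + 1) x y)) := by
  classical
  set n := Fintype.card X with hn
  let e := Fintype.equivFin X
  let idx : X → ℕ := fun x => (e x : ℕ)
  have hidx_lt : ∀ x, idx x < n := fun x => (e x).2
  have hidx_inj : ∀ x y, idx x = idx y → x = y := by
    intro x y h
    exact e.injective (Fin.ext h)
  let code : X → X → ℕ := fun x y => max (idx x) (idx y) * n + min (idx x) (idx y)
  have hcode_symm : ∀ x y, code x y = code y x := by
    intro x y; simp only [code, max_comm, min_comm]
  have hcode_lt : ∀ x y, code x y < n * n := by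
    intro x y
    have hx := hidx_lt x; have hy := hidx_lt y
    have hM : max (idx x) (idx y) + 1 ≤ n := by omega
    have h2 : min (idx x) (idx y) < n := by omega
    calc code x y < max (idx x) (idx y) * n + n := by
          simp only [code]; omega
      _ = (max (idx x) (idx y) + 1) * n := by ring
      _ ≤ n * n := Nat.mul_le_mul_right n hM
  have hcode_inj : ∀ x y u v : X, code x y = code u v →
      (u = x ∧ v = y) ∨ (u = y ∧ v = x) := by
    intro x y u v h
    rcases pair_code_eq (hidx_lt x) (hidx_lt u) h with ⟨h1, h2⟩ | ⟨h1, h2⟩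
    · exact Or.inl ⟨hidx_inj u x h1.symm, hidx_inj v y h2.symm⟩
    · exact Or.inr ⟨hidx_inj u y h2.symm, hidx_inj v x h1.symm⟩
  let offd : ℕ → X → X → ℝ := fun i x y => if code x y < i then T' x y else T x y
  let seq : ℕ → X → X → ℝ := fun i x y =>
    if x = y then 1 - ∑ z ∈ univ.erase x, offd i x z else offd i x y
  have hoffd_nn : ∀ i x y, 0 ≤ offd i x y := by
    intro i x y; simp only [offd]; split_ifs
    · exact hT'nn x y
    · exact hTnn x y
  have hoffd_le : ∀ i x y, x ≠ y → offd i x y ≤ T' x y := by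
    intro i x y hxy; simp only [offd]; split_ifs
    · exact le_refl _
    · exact hge x y hxy
  have hoffd_mono : ∀ i x y, x ≠ y → offd i x y ≤ offd (i + 1) x y := by
    intro i x y hxy; simp only [offd]; split_ifs with h1 h2
    · exact le_refl _
    · omega
    · exact hge x y hxy
    · exact le_refl _
  have hchange : ∀ i x y, code x y ≠ i → offd (i + 1) x y = offd i x y := by
    intro i x y hne; simp only [offd]; split_ifs with h1 h2
    · rfl
    · omega
    · omega
    · rfl
  have hseq_off : ∀ i x y, x ≠ y → seq i x y = offd i x y := by
    intro i x y hxy; simp only [seq, if_neg hxy]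
  have hseq_diag : ∀ i x, seq i x x = 1 - ∑ z ∈ univ.erase x, offd i x z := by
    intro i x; simp only [seq, if_pos rfl]
  have hrow : ∀ i x, ∑ y, seq i x y = 1 := by
    intro i x
    rw [← Finset.add_sum_erase _ _ (mem_univ x)]
    rw [hseq_diag i x, Finset.sum_congr rfl (fun z hz =>
      hseq_off i x z (Ne.symm (ne_of_mem_erase hz)))]
    ring
  have hnn : ∀ i x y, 0 ≤ seq i x y := by
    intro i x y
    by_cases hxy : x = y
    · subst hxy
      rw [hseq_diag]
      have hle : ∑ z ∈ univ.erase x, offd i x z ≤ ∑ z ∈ univ.erase x, T' x z :=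
        Finset.sum_le_sum (fun z hz => hoffd_le i x z (Ne.symm (ne_of_mem_erase hz)))
      have hrow' : T' x x + ∑ z ∈ univ.erase x, T' x z = 1 := by
        rw [Finset.add_sum_erase _ _ (mem_univ x)]; exact hT'row x
      have := hT'nn x x
      linarith
    · rw [hseq_off i x y hxy]; exact hoffd_nn i x y
  have hdbseq : ∀ i x y, π x * seq i x y = π y * seq i y x := by
    intro i x y
    by_cases hxy : x = y
    · subst hxy; rfl
    · rw [hseq_off i x y hxy, hseq_off i y x (Ne.symm hxy)]
      simp only [offd, hcode_symm y x]
      split_ifs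
      · exact hdb' x y
      · exact hdb x y
  have hseq0 : seq 0 = T := by
    funext x y
    by_cases hxy : x = y
    · subst hxy
      rw [hseq_diag]
      have h0 : ∀ z ∈ univ.erase x, offd 0 x z = T x z := by
        intro z _; simp only [offd, Nat.not_lt_zero, if_false]
      rw [Finset.sum_congr rfl h0]
      have : T x x + ∑ z ∈ univ.erase x, T x z = 1 := by
        rw [Finset.add_sum_erase _ _ (mem_univ x)]; exact hTrow x
      linarith
    · rw [hseq_off 0 x y hxy]; simp only [offd, Nat.not_lt_zero, if_false]
  have hseqk : seq (n * n) = T' := by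
    funext x y
    by_cases hxy : x = y
    · subst hxy
      rw [hseq_diag]
      have h0 : ∀ z ∈ univ.erase x, offd (n * n) x z = T' x z := by
        intro z _; simp only [offd, if_pos (hcode_lt x z)]
      rw [Finset.sum_congr rfl h0]
      have : T' x x + ∑ z ∈ univ.erase x, T' x z = 1 := by
        rw [Finset.add_sum_erase _ _ (mem_univ x)]; exact hT'row x
      linarith
    · rw [hseq_off _ x y hxy]; simp only [offd, if_pos (hcode_lt x y)]
  refine ⟨n * n, seq, hseq0, hseqk, fun i _ => ⟨hnn i, hrow i, hdbseq i⟩, ?_⟩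
  intro i hi
  by_cases hex : ∃ p : X × X, p.1 ≠ p.2 ∧ code p.1 p.2 = i
  · obtain ⟨⟨A, B⟩, hAB, hcodeAB⟩ := hex
    refine ⟨A, B, ?_, ?_⟩
    · intro x y hxy
      by_cases hxy' : x = y
      · subst hxy'
        have hnot : ¬(x = A ∨ x = B) := by tauto
        rw [hseq_diag, hseq_diag]
        congr 1
        refine Finset.sum_congr rfl (fun z hz => ?_)
        refine hchange i x z (fun hc => ?_)
        rcases hcode_inj A B x z (hcodeAB.trans hc.symm) with ⟨h1, _⟩ | ⟨h1, _⟩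
        · exact hnot (Or.inl h1)
        · exact hnot (Or.inr h1)
      · rw [hseq_off _ x y hxy', hseq_off _ x y hxy']
        refine hchange i x y (fun hc => ?_)
        rcases hcode_inj A B x y (hcodeAB.trans hc.symm) with ⟨h1, h2⟩ | ⟨h1, h2⟩
        · exact hxy ⟨Or.inl h1, Or.inr h2⟩
        · exact hxy ⟨Or.inr h1, Or.inl h2⟩
    · intro x y hxy
      rw [hseq_off _ x y hxy, hseq_off _ x y hxy]
      exact hoffd_mono i x y hxy
  · push_neg at hex
    have hnpos : 0 < n := by
      rcases Nat.eq_zero_or_pos n with h | h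
      · rw [h] at hi; simp at hi
      · exact h
    let A : X := e.symm ⟨0, hnpos⟩
    have heq : ∀ x y, seq (i + 1) x y = seq i x y := by
      intro x y
      by_cases hxy : x = y
      · subst hxy
        rw [hseq_diag, hseq_diag]
        congr 1
        refine Finset.sum_congr rfl (fun z hz => ?_)
        exact hchange i x z (hex (x, z) (Ne.symm (ne_of_mem_erase hz)))
      · rw [hseq_off _ x y hxy, hseq_off _ x y hxy]
        exact hchange i x y (hex (x, y) hxy)
    exact ⟨A, A, fun x y _ => heq x y, fun x y _ => le_of_eq (heq x y).symm⟩
end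

section
/- Consider the deterministic no-backtracking chain derived from the simple random walk on {1,...,N} (with T(x,x±1) = 1/2 and holding at the endpoints): the induced transition map on Ẍ = {(x,y) : T(x,y) > 0} obtained by applying Liu's modified update is a deterministic permutation of Ẍ, i.e., for every state (x,y) ∈ Ẍ there is exactly one successor state with transition probability 1. -/
theorem random_walk_no_backtracking_deterministic
    (N : ℕ) (hN : 2 ≤ N)
    (T : Fin N → Fin N → ℝ)
    (hT : ∀ x y : Fin N, T x y =
      if (x.val + 1 = y.val ∨ y.val + 1 = x.val) ∨
         (x = y ∧ (x.val = 0 ∨ x.val + 1 = N)) then 1/2 else 0)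
    (U' : Fin N → Fin N → Fin N → ℝ)
    (hU' : ∀ x y z : Fin N, z ≠ y →
      U' x y z = min (T x z / (1 - T x y)) (T x z / (1 - T x z)))
    (hU'row : ∀ x y : Fin N, ∑ z, U' x y z = 1)
    (Tdd : Fin N × Fin N → Fin N × Fin N → ℝ)
    (hTdd : ∀ p q, Tdd p q = (if p.2 = q.1 then 1 else 0) * U' p.2 p.1 q.2) :
    ∀ p : Fin N × Fin N, 0 < T p.1 p.2 →
      ∃! q : Fin N × Fin N, 0 < T q.1 q.2 ∧ Tdd p q = 1 := by
  set P : Fin N → Fin N → Prop := fun a b =>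
    (a.val + 1 = b.val ∨ b.val + 1 = a.val) ∨ (a = b ∧ (a.val = 0 ∨ a.val + 1 = N)) with hP
  have hTpos : ∀ a b : Fin N, 0 < T a b ↔ P a b := by
    intro a b
    rw [hT a b]
    split_ifs with h
    · simp only [hP, h, iff_true]; norm_num
    · simp [hP, h]
  have hThalf : ∀ a b : Fin N, P a b → T a b = 1/2 := by
    intro a b h; rw [hT a b, if_pos h]
  have hTzero : ∀ a b : Fin N, ¬ P a b → T a b = 0 := by
    intro a b h; rw [hT a b, if_neg h]
  intro p hp
  obtain ⟨x, y⟩ := p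
  have hPxy : P x y := (hTpos x y).mp hp
  have hPyx : P y x := by
    rcases hPxy with (h | h) | ⟨h, h2⟩
    · exact Or.inl (Or.inr h)
    · exact Or.inl (Or.inl h)
    · exact Or.inr ⟨h.symm, by rw [← h]; exact h2⟩
  have hyN := y.isLt
  have hxN := x.isLt
  -- find the unique successor z*
  obtain ⟨zs, hz1, hz2, hz3⟩ :
      ∃ zs : Fin N, P y zs ∧ zs ≠ x ∧ ∀ z : Fin N, P y z → z = x ∨ z = zs := by
    rcases hPxy with (h | h) | ⟨h, h2⟩
    · -- x + 1 = y
      by_cases hb : y.val + 1 = N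
      · refine ⟨y, Or.inr ⟨rfl, Or.inr hb⟩, fun he => by rw [he] at h; omega, ?_⟩
        intro z hz
        rcases hz with (hz | hz) | ⟨hz, _⟩
        · omega
        · exact Or.inl (Fin.ext (by omega))
        · exact Or.inr hz.symm
      · refine ⟨⟨y.val + 1, by omega⟩, Or.inl (Or.inl rfl), fun he => by
          have := congrArg Fin.val he; simp at this; omega, ?_⟩
        intro z hz
        rcases hz with (hz | hz) | ⟨hz, hz2⟩
        · exact Or.inr (Fin.ext (by simp; omega))
        · exact Or.inl (Fin.ext (by omega))
        · omega
    · -- y + 1 = x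
      by_cases hb : y.val = 0
      · refine ⟨y, Or.inr ⟨rfl, Or.inl hb⟩, fun he => by rw [he] at h; omega, ?_⟩
        intro z hz
        rcases hz with (hz | hz) | ⟨hz, _⟩
        · exact Or.inl (Fin.ext (by omega))
        · omega
        · exact Or.inr hz.symm
      · refine ⟨⟨y.val - 1, by omega⟩, Or.inl (Or.inr (by simp; omega)), fun he => by
          have := congrArg Fin.val he; simp at this; omega, ?_⟩
        intro z hz
        rcases hz with (hz | hz) | ⟨hz, hz2⟩
        · exact Or.inl (Fin.ext (by omega))
        · exact Or.inr (Fin.ext (by simp; omega))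
        · omega
    · -- x = y, endpoint
      rcases h2 with h0 | hend
      · -- x.val = 0
        have hy0 : y.val = 0 := by rw [← h]; exact h0
        refine ⟨⟨1, by omega⟩, Or.inl (Or.inl (by simp; omega)), fun he => by
          have := congrArg Fin.val he; simp at this; omega, ?_⟩
        intro z hz
        rcases hz with (hz | hz) | ⟨hz, _⟩
        · exact Or.inr (Fin.ext (by simp; omega))
        · omega
        · exact Or.inl (hz.symm.trans h.symm)
      · -- x.val + 1 = N
        have hyend : y.val + 1 = N := by rw [← h]; exact hend
        refine ⟨⟨y.val - 1, by omega⟩, Or.inl (Or.inr (by simp; omega)), fun he => by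
          have := congrArg Fin.val he; have hx := congrArg Fin.val h
          simp at this; omega, ?_⟩
        intro z hz
        rcases hz with (hz | hz) | ⟨hz, _⟩
        · omega
        · exact Or.inr (Fin.ext (by simp; omega))
        · exact Or.inl (hz.symm.trans h.symm)
  -- key values of U'
  have hUzs : U' y x zs = 1 := by
    rw [hU' y x zs hz2, hThalf y zs hz1, hThalf y x hPyx]
    norm_num
  have hUother : ∀ z : Fin N, z ≠ x → z ≠ zs → U' y x z = 0 := by
    intro z hzx hzzs
    have hnz : ¬ P y z := by
      intro hpz
      rcases hz3 z hpz with h | h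
      · exact hzx h
      · exact hzzs h
    rw [hU' y x z hzx, hTzero y z hnz, hThalf y x hPyx]
    norm_num
  have hUx : U' y x x = 0 := by
    have hrow := hU'row y x
    have hsum : ∑ z, U' y x z
        = ∑ z : Fin N, ((if z = x then U' y x x else 0) + (if z = zs then 1 else 0)) := by
      apply Finset.sum_congr rfl
      intro z _
      by_cases h1 : z = x
      · subst h1
        rw [if_pos rfl, if_neg (fun h => hz2 h.symm)]
        ring
      · by_cases h2 : z = zs
        · subst h2
          rw [if_neg h1, if_pos rfl, hUzs]
          ring
        · rw [if_neg h1, if_neg h2, hUother z h1 h2]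
          ring
    rw [hsum, Finset.sum_add_distrib] at hrow
    simp [Finset.sum_ite_eq'] at hrow
    linarith
  -- conclude
  refine ⟨(y, zs), ⟨(hTpos y zs).mpr hz1, ?_⟩, ?_⟩
  · rw [hTdd]
    simp [hUzs]
  · rintro ⟨a, b⟩ ⟨hq1, hq2⟩
    rw [hTdd] at hq2
    simp only at hq2
    by_cases hya : y = a
    · subst hya
      rw [if_pos rfl, one_mul] at hq2
      have hPyb : P y b := (hTpos y b).mp hq1
      rcases hz3 b hPyb with hbx | hbz
      · subst hbx
        rw [hUx] at hq2
        norm_num at hq2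
      · subst hbz
        rfl
    · rw [if_neg hya, zero_mul] at hq2
      norm_num at hq2
end
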